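/- Assume the random variables Y_1, …, Y_N are independent under P and the design does not depend on ω (p(s, ω) = q(s)). If s₀ is a sample with q(s₀) > 0 whose drawn labels s₀(1), …, s₀(n) are pairwise distinct, then the sample variables Y_{i(1)}, …, Y_{i(n)} (where Y_{i(k)}(s, ω) = Y_{s(k)}(ω)) are mutually stochastically independent under the posterior distribution P(· | s₀). -/

import Mathlib

open MeasureTheory Filter Topology ProbabilityTheory

lemma iIndepFun_reindex {Ω : Type*} [MeasurableSpace Ω] (P : Measure Ω)
    [IsProbabilityMeasure P] {n N : ℕ} (hn : 1 ≤ n)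
    (Y : Fin N → Ω → ℝ)
    (hYindep : iIndepFun Y P)
    (s₀ : Fin n → Fin N) (hs₀ : Function.Injective s₀) :
    iIndepFun (fun k => Y (s₀ k)) P := by
  have hne : Nonempty (Fin n) := ⟨⟨0, hn⟩⟩
  rw [iIndepFun_iff_measure_inter_preimage_eq_mul]
  intro S sets hsets
  set g : Fin N → Set ℝ := fun i => sets (Function.invFun s₀ i) with hg
  have hginv : ∀ k, g (s₀ k) = sets k := by
    intro k
    simp [hg, Function.leftInverse_invFun hs₀ k]
  have h := hYindep.measure_inter_preimage_eq_mul (S.image s₀)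
    (sets := g) (by
      intro i hi
      rcases Finset.mem_image.mp hi with ⟨k, hk, rfl⟩
      rw [hginv]
      exact hsets k hk)
  rw [Finset.set_biInter_finset_image, Finset.prod_image
    (fun x _ y _ h => hs₀ h)] at h
  simpa only [hginv] using h

theorem statement9
    {Ω : Type*} [MeasurableSpace Ω] (P : Measure Ω) [IsProbabilityMeasure P]
    (n N : ℕ) (hn : 1 ≤ n) (hnN : n ≤ N)
    (Y : Fin N → Ω → ℝ) (hYmeas : ∀ i, Measurable (Y i))
    (hYindep : iIndepFun Y P)
    (Q : Measure (Fin n → Fin N)) [IsProbabilityMeasure Q]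
    (s₀ : Fin n → Fin N) (hq₀ : 0 < Q {s₀}) (hs₀ : Function.Injective s₀) :
    iIndepFun
      (fun (k : Fin n) (x : (Fin n → Fin N) × Ω) => Y (x.1 k) x.2)
      ((Q.prod P)[|{s₀} ×ˢ Set.univ]) := by
  have hE : MeasurableSet ({s₀} ×ˢ (Set.univ : Set Ω)) :=
    (measurableSet_singleton s₀).prod MeasurableSet.univ
  have hQ0 : Q {s₀} ≠ 0 := hq₀.ne'
  have hQtop : Q {s₀} ≠ ⊤ := measure_ne_top Q _
  -- key: the conditional measure evaluates to P of the slice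
  have key : ∀ B : Set ((Fin n → Fin N) × Ω),
      ((Q.prod P)[|{s₀} ×ˢ Set.univ]) B = P (Prod.mk s₀ ⁻¹' B) := by
    intro B
    rw [cond_apply hE]
    have hBB : ({s₀} ×ˢ (Set.univ : Set Ω)) ∩ B = {s₀} ×ˢ (Prod.mk s₀ ⁻¹' B) := by
      ext ⟨s, ω⟩
      simp only [Set.mem_inter_iff, Set.mem_prod, Set.mem_singleton_iff, Set.mem_univ,
        and_true, Set.mem_preimage]
      constructor
      · rintro ⟨rfl, h⟩; exact ⟨rfl, h⟩
      · rintro ⟨rfl, h⟩; exact ⟨rfl, h⟩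
    rw [hBB, Measure.prod_prod, Measure.prod_prod, measure_univ, mul_one,
      ← mul_assoc, ENNReal.inv_mul_cancel hQ0 hQtop, one_mul]
  have hsub := iIndepFun_reindex P hn Y hYindep s₀ hs₀
  rw [iIndepFun_iff_measure_inter_preimage_eq_mul] at hsub ⊢
  intro S sets hsets
  have hpre : ∀ k : Fin n,
      Prod.mk s₀ ⁻¹' ((fun x : (Fin n → Fin N) × Ω => Y (x.1 k) x.2) ⁻¹' sets k)
        = Y (s₀ k) ⁻¹' sets k := by
    intro k; rfl
  calc ((Q.prod P)[|{s₀} ×ˢ Set.univ])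
        (⋂ k ∈ S, (fun x : (Fin n → Fin N) × Ω => Y (x.1 k) x.2) ⁻¹' sets k)
      = P (Prod.mk s₀ ⁻¹' ⋂ k ∈ S,
          (fun x : (Fin n → Fin N) × Ω => Y (x.1 k) x.2) ⁻¹' sets k) := key _
    _ = P (⋂ k ∈ S, Y (s₀ k) ⁻¹' sets k) := by
          simp only [Set.preimage_iInter]
          exact congrArg P (Set.iInter₂_congr fun k _ => hpre k)
    _ = ∏ k ∈ S, P (Y (s₀ k) ⁻¹' sets k) := hsub S hsets
    _ = ∏ k ∈ S, ((Q.prod P)[|{s₀} ×ˢ Set.univ])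
          ((fun x : (Fin n → Fin N) × Ω => Y (x.1 k) x.2) ⁻¹' sets k) :=
        Finset.prod_congr rfl fun k _ => by rw [key, hpre]
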